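/- Let X₁, ..., Xₙ be i.i.d. real random variables, and for each i let X_{n,i} be the right nearest neighbor of X_i among {X_j : j ≠ i} (the smallest X_j with j ≠ i that is ≥ X_i, with X_{n,i} := X_i if none exists). Then for any measurable function f : ℝ → [0, ∞), E[f(X_{n,1})] ≤ 2 E[f(X₁)]. -/

import Mathlib

open MeasureTheory ProbabilityTheory

open scoped Classical in
/-- For i.i.d. `X 0, …, X (n-1)` with `n ≥ 2`, if `X' i` denotes the right nearest
neighbor of `X i` among the other `X j`'s (equal to `X i` if none exists), then
for any measurable `f : ℝ → [0,∞)`, `E[f(X' 0)] ≤ 2 E[f(X 0)]`. -/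
theorem stmt_11 {Ω : Type*} [MeasureSpace Ω] [IsProbabilityMeasure (ℙ : Measure Ω)]
    (n : ℕ) (hn : 2 ≤ n) (X : Fin n → Ω → ℝ) (hX : ∀ i, Measurable (X i))
    (ν : Measure ℝ) (hiid : ∀ i, Measure.map (X i) ℙ = ν)
    (hindep : iIndepFun X ℙ)
    (f : ℝ → ℝ) (hf : Measurable f) (hf0 : ∀ x, 0 ≤ f x)
    (i₀ : Fin n) (hi₀ : (i₀ : ℕ) = 0) :
    (∫⁻ ω, ENNReal.ofReal (f
        (if h : {v : ℝ | ∃ j : Fin n, j ≠ i₀ ∧ X j ω = v ∧ X i₀ ω ≤ v}.Nonempty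
         then sInf {v : ℝ | ∃ j : Fin n, j ≠ i₀ ∧ X j ω = v ∧ X i₀ ω ≤ v}
         else X i₀ ω)) ∂(ℙ : Measure Ω))
      ≤ 2 * ∫⁻ ω, ENNReal.ofReal (f (X i₀ ω)) ∂(ℙ : Measure Ω) := by
  have hν : IsProbabilityMeasure ν := by
    rw [← hiid i₀]; exact Measure.isProbabilityMeasure_map (hX i₀).aemeasurable
  set π : Measure (Fin n → ℝ) := Measure.pi (fun _ => ν) with hπ
  have hY : Measurable (fun ω i => X i ω) := measurable_pi_lambda _ (fun i => hX i)
  -- joint law is the product measure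
  have hlaw : Measure.map (fun ω i => X i ω) ℙ = π := by
    rw [hπ]
    refine (Measure.pi_eq fun s hs => ?_).symm
    rw [Measure.map_apply hY (MeasurableSet.univ_pi hs)]
    have hpre : (fun ω i => X i ω) ⁻¹' Set.pi Set.univ s = ⋂ i ∈ Finset.univ, X i ⁻¹' s i := by
      ext ω; simp [Set.mem_pi]
    rw [hpre, hindep.measure_inter_preimage_eq_mul Finset.univ (fun i _ => hs i)]
    refine Finset.prod_congr rfl fun i _ => ?_
    rw [← hiid i, Measure.map_apply (hX i) (hs i)]
  -- permutation invariance of π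
  have hmp : ∀ σ : Equiv.Perm (Fin n),
      Measure.map (fun x : Fin n → ℝ => x ∘ σ) π = π := by
    intro σ
    have hT : Measurable (fun x : Fin n → ℝ => x ∘ σ) :=
      measurable_pi_lambda _ (fun i => measurable_pi_apply (σ i))
    rw [hπ]
    refine (Measure.pi_eq fun s hs => ?_).symm
    rw [Measure.map_apply hT (MeasurableSet.univ_pi hs)]
    have hpre : (fun x : Fin n → ℝ => x ∘ σ) ⁻¹' Set.pi Set.univ s
        = Set.pi Set.univ (fun i => s (σ.symm i)) := by
      ext x
      simp only [Set.mem_preimage, Set.mem_pi, Set.mem_univ, forall_true_left, Function.comp]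
      constructor
      · intro hx i; have := hx (σ.symm i); rwa [Equiv.apply_symm_apply] at this
      · intro hx i; have := hx (σ i); rwa [Equiv.symm_apply_apply] at this
    rw [hpre, Measure.pi_pi]
    exact Equiv.prod_comp σ.symm fun i => ν (s i)
  -- the events
  set A : Fin n → Set (Fin n → ℝ) :=
    fun j => {x | x i₀ < x j ∧ ∀ k, k ≠ i₀ → x i₀ ≤ x k → x j ≤ x k} with hAdef
  have hA : ∀ j, MeasurableSet (A j) := by
    intro j
    have h1 : MeasurableSet {x : Fin n → ℝ | x i₀ < x j} :=
      measurableSet_lt (measurable_pi_apply i₀) (measurable_pi_apply j)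
    have h2 : ∀ k : Fin n, MeasurableSet {x : Fin n → ℝ | k ≠ i₀ → x i₀ ≤ x k → x j ≤ x k} := by
      intro k
      by_cases hk : k = i₀
      · simp [hk]
      · have : {x : Fin n → ℝ | k ≠ i₀ → x i₀ ≤ x k → x j ≤ x k}
            = {x : Fin n → ℝ | x i₀ ≤ x k}ᶜ ∪ {x : Fin n → ℝ | x j ≤ x k} := by
          ext x
          simp only [Set.mem_union, Set.mem_compl_iff, Set.mem_setOf_eq]
          constructor
          · intro hx
            by_cases hle : x i₀ ≤ x k
            · exact Or.inr (hx hk hle)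
            · exact Or.inl hle
          · rintro (h | h)
            · intro _ hle; exact absurd hle h
            · intro _ _; exact h
        rw [this]
        exact ((measurableSet_le (measurable_pi_apply i₀) (measurable_pi_apply k)).compl).union
          (measurableSet_le (measurable_pi_apply j) (measurable_pi_apply k))
    have hAeq : A j = {x : Fin n → ℝ | x i₀ < x j}
        ∩ ⋂ k, {x : Fin n → ℝ | k ≠ i₀ → x i₀ ≤ x k → x j ≤ x k} := by
      ext x; simp only [hAdef, Set.mem_setOf_eq, Set.mem_inter_iff, Set.mem_iInter]
    rw [hAeq]
    exact h1.inter (MeasurableSet.iInter h2)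
  set B : Fin n → Set (Fin n → ℝ) :=
    fun j => (fun x => x ∘ (Equiv.swap i₀ j)) ⁻¹' A j with hBdef
  have hB : ∀ j, MeasurableSet (B j) := by
    intro j
    exact (hA j).preimage (measurable_pi_lambda _ (fun i => measurable_pi_apply _))
  -- description of B
  have hBprop : ∀ j : Fin n, j ≠ i₀ → ∀ x : Fin n → ℝ, x ∈ B j →
      x j < x i₀ ∧ ∀ k, k ≠ i₀ → k ≠ j → x j ≤ x k → x i₀ ≤ x k := by
    intro j hj x hx
    obtain ⟨h1, h2⟩ := hx
    have hσl : Equiv.swap i₀ j i₀ = j := Equiv.swap_apply_left _ _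
    have hσr : Equiv.swap i₀ j j = i₀ := Equiv.swap_apply_right _ _
    constructor
    · have : (x ∘ Equiv.swap i₀ j) i₀ < (x ∘ Equiv.swap i₀ j) j := h1
      simpa [Function.comp, hσl, hσr] using this
    · intro k hki₀ hkj hle
      have hσk : Equiv.swap i₀ j k = k := Equiv.swap_apply_of_ne_of_ne hki₀ hkj
      have := h2 k hki₀
      simp only [Function.comp, hσl, hσr, hσk] at this
      exact this hle
  -- pointwise key bound
  have key : ∀ x : Fin n → ℝ,
      ENNReal.ofReal (f (if h : {v : ℝ | ∃ j : Fin n, j ≠ i₀ ∧ x j = v ∧ x i₀ ≤ v}.Nonempty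
          then sInf {v : ℝ | ∃ j : Fin n, j ≠ i₀ ∧ x j = v ∧ x i₀ ≤ v} else x i₀))
      ≤ ENNReal.ofReal (f (x i₀))
        + ∑ j ∈ Finset.univ.erase i₀,
            (A j).indicator (fun y => ENNReal.ofReal (f (y j))) x := by
    intro x
    by_cases h : {v : ℝ | ∃ j : Fin n, j ≠ i₀ ∧ x j = v ∧ x i₀ ≤ v}.Nonempty
    · rw [dif_pos h]
      set S := {v : ℝ | ∃ j : Fin n, j ≠ i₀ ∧ x j = v ∧ x i₀ ≤ v} with hS
      have hfin : S.Finite := by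
        have hsub : S ⊆ Set.range x := by rintro v ⟨j, _, hj, _⟩; exact ⟨j, hj⟩
        exact (Set.finite_range x).subset hsub
      have hmem : sInf S ∈ S := Set.Nonempty.csInf_mem h hfin
      obtain ⟨j, hjne, hxj, hle⟩ := hmem
      by_cases heq : sInf S = x i₀
      · rw [heq]; exact le_add_right le_rfl
      · have hjA : x ∈ A j := by
          constructor
          · have hlt : x i₀ < sInf S := lt_of_le_of_ne hle (Ne.symm heq)
            rw [hxj]; exact hlt
          · intro k hk hk2
            rw [hxj]
            exact csInf_le hfin.bddBelow ⟨k, hk, rfl, hk2⟩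
        calc ENNReal.ofReal (f (sInf S))
            = (A j).indicator (fun y => ENNReal.ofReal (f (y j))) x := by
              rw [Set.indicator_of_mem hjA, hxj]
          _ ≤ ∑ j ∈ Finset.univ.erase i₀,
                (A j).indicator (fun y => ENNReal.ofReal (f (y j))) x :=
              Finset.single_le_sum
                (f := fun k => (A k).indicator (fun y => ENNReal.ofReal (f (y k))) x)
                (fun i _ => zero_le)
                (Finset.mem_erase.mpr ⟨hjne, Finset.mem_univ j⟩)
          _ ≤ _ := le_add_self
    · rw [dif_neg h]; exact le_add_right le_rfl
  -- measurability of pieces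
  have hc : Measurable (fun x : Fin n → ℝ => ENNReal.ofReal (f (x i₀))) :=
    ((hf.comp (measurable_pi_apply i₀))).ennreal_ofReal
  have hind : ∀ j : Fin n,
      Measurable ((A j).indicator (fun y : Fin n → ℝ => ENNReal.ofReal (f (y j)))) := by
    intro j
    exact Measurable.indicator ((hf.comp (measurable_pi_apply j)).ennreal_ofReal) (hA j)
  have hindB : ∀ j : Fin n,
      Measurable ((B j).indicator (fun y : Fin n → ℝ => ENNReal.ofReal (f (y i₀)))) := by
    intro j
    exact Measurable.indicator hc (hB j)
  -- swap each A-term into a B-term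
  have hswap : ∀ j : Fin n, j ≠ i₀ →
      ∫⁻ x, (A j).indicator (fun y => ENNReal.ofReal (f (y j))) x ∂π
        = ∫⁻ x, (B j).indicator (fun y => ENNReal.ofReal (f (y i₀))) x ∂π := by
    intro j hj
    have hT : Measurable (fun x : Fin n → ℝ => x ∘ (Equiv.swap i₀ j)) :=
      measurable_pi_lambda _ (fun i => measurable_pi_apply _)
    calc ∫⁻ x, (A j).indicator (fun y => ENNReal.ofReal (f (y j))) x ∂π
        = ∫⁻ x, (A j).indicator (fun y => ENNReal.ofReal (f (y j))) x
            ∂(Measure.map (fun x : Fin n → ℝ => x ∘ (Equiv.swap i₀ j)) π) := by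
          rw [hmp (Equiv.swap i₀ j)]
      _ = ∫⁻ x, (A j).indicator (fun y => ENNReal.ofReal (f (y j))) (x ∘ (Equiv.swap i₀ j)) ∂π :=
          lintegral_map (hind j) hT
      _ = ∫⁻ x, (B j).indicator (fun y => ENNReal.ofReal (f (y i₀))) x ∂π := by
          refine lintegral_congr fun x => ?_
          by_cases hx : x ∈ B j
          · have hx' : x ∘ (Equiv.swap i₀ j) ∈ A j := hx
            rw [Set.indicator_of_mem hx, Set.indicator_of_mem hx']
            have hval : (x ∘ Equiv.swap i₀ j) j = x i₀ := by
              simp [Function.comp, Equiv.swap_apply_right]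
            rw [hval]
          · have hx' : x ∘ (Equiv.swap i₀ j) ∉ A j := hx
            rw [Set.indicator_of_notMem hx, Set.indicator_of_notMem hx']
  -- the B's are pairwise disjoint, so the sum of indicators is bounded
  have hpt : ∀ x : Fin n → ℝ,
      ∑ j ∈ Finset.univ.erase i₀,
          (B j).indicator (fun y => ENNReal.ofReal (f (y i₀))) x
        ≤ ENNReal.ofReal (f (x i₀)) := by
    intro x
    by_cases hex : ∃ j ∈ Finset.univ.erase i₀, x ∈ B j
    · obtain ⟨j₁, hj₁s, hj₁⟩ := hex
      rw [Finset.sum_eq_single_of_mem j₁ hj₁s ?_]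
      · rw [Set.indicator_of_mem hj₁]
      · intro j hjs hne
        rw [Set.indicator_of_notMem]
        intro hxj
        have hj : j ≠ i₀ := Finset.ne_of_mem_erase hjs
        have hj₁' : j₁ ≠ i₀ := Finset.ne_of_mem_erase hj₁s
        obtain ⟨l1, m1⟩ := hBprop j hj x hxj
        obtain ⟨l2, m2⟩ := hBprop j₁ hj₁' x hj₁
        rcases le_total (x j) (x j₁) with hcmp | hcmp
        · exact absurd (m1 j₁ hj₁' (Ne.symm hne) hcmp) (not_le.mpr l2)
        · exact absurd (m2 j hj hne hcmp) (not_le.mpr l1)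
    · push_neg at hex
      rw [Finset.sum_eq_zero (fun j hj => Set.indicator_of_notMem (hex j hj) _)]
      exact zero_le
  -- assemble
  have hI : ∫⁻ x, ENNReal.ofReal (f (x i₀)) ∂π
      = ∫⁻ ω, ENNReal.ofReal (f (X i₀ ω)) ∂(ℙ : Measure Ω) := by
    rw [← hlaw, lintegral_map hc hY]
  calc (∫⁻ ω, ENNReal.ofReal (f
        (if h : {v : ℝ | ∃ j : Fin n, j ≠ i₀ ∧ X j ω = v ∧ X i₀ ω ≤ v}.Nonempty
         then sInf {v : ℝ | ∃ j : Fin n, j ≠ i₀ ∧ X j ω = v ∧ X i₀ ω ≤ v}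
         else X i₀ ω)) ∂(ℙ : Measure Ω))
      ≤ ∫⁻ ω, (ENNReal.ofReal (f (X i₀ ω))
          + ∑ j ∈ Finset.univ.erase i₀,
              (A j).indicator (fun y => ENNReal.ofReal (f (y j))) (fun i => X i ω))
          ∂(ℙ : Measure Ω) := lintegral_mono fun ω => key (fun i => X i ω)
    _ = ∫⁻ x, (ENNReal.ofReal (f (x i₀))
          + ∑ j ∈ Finset.univ.erase i₀,
              (A j).indicator (fun y => ENNReal.ofReal (f (y j))) x) ∂π := by
        rw [← hlaw, lintegral_map (f := fun x => ENNReal.ofReal (f (x i₀)) + ∑ j ∈ Finset.univ.erase i₀, (A j).indicator (fun y => ENNReal.ofReal (f (y j))) x) (hc.add (Finset.measurable_sum _ fun j _ => hind j)) hY]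
    _ = (∫⁻ x, ENNReal.ofReal (f (x i₀)) ∂π)
          + ∑ j ∈ Finset.univ.erase i₀,
              ∫⁻ x, (A j).indicator (fun y => ENNReal.ofReal (f (y j))) x ∂π := by
        rw [lintegral_add_left hc, lintegral_finset_sum _ fun j _ => hind j]
    _ = (∫⁻ x, ENNReal.ofReal (f (x i₀)) ∂π)
          + ∑ j ∈ Finset.univ.erase i₀,
              ∫⁻ x, (B j).indicator (fun y => ENNReal.ofReal (f (y i₀))) x ∂π := by
        congr 1
        exact Finset.sum_congr rfl fun j hj => hswap j (Finset.ne_of_mem_erase hj)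
    _ = (∫⁻ x, ENNReal.ofReal (f (x i₀)) ∂π)
          + ∫⁻ x, (∑ j ∈ Finset.univ.erase i₀,
              (B j).indicator (fun y => ENNReal.ofReal (f (y i₀))) x) ∂π := by
        rw [lintegral_finset_sum _ fun j _ => hindB j]
    _ ≤ (∫⁻ x, ENNReal.ofReal (f (x i₀)) ∂π)
          + ∫⁻ x, ENNReal.ofReal (f (x i₀)) ∂π :=
        add_le_add_right (lintegral_mono hpt) _
    _ = 2 * ∫⁻ ω, ENNReal.ofReal (f (X i₀ ω)) ∂(ℙ : Measure Ω) := by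
        rw [hI, two_mul]
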